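/- For every $i \geq 1$, the annihilator $J_i = \operatorname{ann}_S H^i(G, R)$ of the group cohomology module $H^i(G, R)$ is a nonzero ideal of $S$. -/

import Mathlib

set_option linter.unusedSectionVars false

open MvPolynomial

noncomputable section

variable (𝔽 : Type) [Field 𝔽] [Fintype 𝔽] [DecidableEq 𝔽] (d : ℕ)

/-- The polynomial ring `R = 𝔽_q[V] = Sym(V^*)`, realized as a polynomial ring in `d`
variables (the variables `X i` forming a basis of `V^*`). -/
abbrev PolyR := MvPolynomial (Fin d) 𝔽

/-- The linear form in `V^* ⊆ R` with coefficient vector `c`. -/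
def linForm (c : Fin d → 𝔽) : PolyR 𝔽 d := ∑ i, MvPolynomial.C (c i) * X i

/-- The action of `g ∈ GL(V)` on `R = Sym(V^*)`, induced by the (contragredient) action
of `GL(V)` on linear forms: the linear form with coefficient vector `c` is sent to the
linear form with coefficient vector `c ⬝ g⁻¹`. -/
def glAct (g : GL (Fin d) 𝔽) : PolyR 𝔽 d →ₐ[𝔽] PolyR 𝔽 d :=
  aeval fun i => linForm 𝔽 d fun j => ((g⁻¹ : GL (Fin d) 𝔽) : Matrix (Fin d) (Fin d) 𝔽) i j

lemma glAct_one : glAct 𝔽 d 1 = AlgHom.id 𝔽 (PolyR 𝔽 d) := by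
  apply MvPolynomial.algHom_ext
  intro i
  simp [glAct, linForm, Matrix.one_apply, apply_ite MvPolynomial.C, ite_mul,
    Finset.sum_ite_eq]

lemma glAct_mul (g h : GL (Fin d) 𝔽) :
    glAct 𝔽 d (g * h) = (glAct 𝔽 d g).comp (glAct 𝔽 d h) := by
  apply MvPolynomial.algHom_ext
  intro i
  simp only [glAct, aeval_X, AlgHom.comp_apply, linForm, map_sum, map_mul, aeval_C, aeval_X,
    mul_inv_rev, Units.val_mul, Matrix.mul_apply, algebraMap_eq, Finset.mul_sum, C_mul,
    Finset.sum_mul]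
  rw [Finset.sum_comm]
  simp [mul_assoc]

variable (G : Subgroup (GL (Fin d) 𝔽))

/-- The invariant ring `S = R^G`. -/
def invS : Subalgebra 𝔽 (PolyR 𝔽 d) :=
  ⨅ g ∈ G, AlgHom.equalizer (glAct 𝔽 d g) (AlgHom.id 𝔽 (PolyR 𝔽 d))

lemma mem_invS (r : PolyR 𝔽 d) : r ∈ invS 𝔽 d G ↔ ∀ g ∈ G, glAct 𝔽 d g r = r := by
  simp [invS, Algebra.mem_iInf, AlgHom.mem_equalizer]

/-- `R` as a representation of `G` over `S = R^G` (the `G`-action on `R` is `S`-linear). -/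
def invRep : Representation (invS 𝔽 d G) G (PolyR 𝔽 d) where
  toFun g :=
    { toFun := glAct 𝔽 d g
      map_add' := by simp
      map_smul' := by
        intro s r
        have hs : glAct 𝔽 d (g : GL (Fin d) 𝔽) (s : PolyR 𝔽 d) = (s : PolyR 𝔽 d) :=
          (mem_invS 𝔽 d G _).mp s.2 g g.2
        simp only [Algebra.smul_def, map_mul, RingHom.id_apply]
        rw [show (algebraMap (invS 𝔽 d G) (PolyR 𝔽 d)) s = (s : PolyR 𝔽 d) from rfl, hs] }
  map_one' := LinearMap.ext fun r => by
    show glAct 𝔽 d ((1 : G) : GL (Fin d) 𝔽) r = r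
    rw [OneMemClass.coe_one, glAct_one]
    rfl
  map_mul' := fun g h => LinearMap.ext fun r => by
    show glAct 𝔽 d ((g * h : G) : GL (Fin d) 𝔽) r = glAct 𝔽 d g (glAct 𝔽 d h r)
    rw [MulMemClass.coe_mul, glAct_mul]
    rfl

/-- The `i`-th group cohomology `H^i(G, R)`, as a module over `S = R^G`. -/
def cohGR (i : ℕ) : ModuleCat (invS 𝔽 d G) := groupCohomology (Rep.of (invRep 𝔽 d G)) i

/-- `J_i`, the annihilator of `H^i(G, R)` in `S`. -/
def annJ (i : ℕ) : Ideal (invS 𝔽 d G) := Module.annihilator (invS 𝔽 d G) (cohGR 𝔽 d G i)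

/-- The top Dickson class `𝐝_{d,0} = ∏_{0 ≠ v ∈ V^*} v ∈ R`. -/
def dickson : PolyR 𝔽 d := ∏ c ∈ Finset.univ.filter (fun c : Fin d → 𝔽 => c ≠ 0), linForm 𝔽 d c


lemma glAct_linForm (g : GL (Fin d) 𝔽) (c : Fin d → 𝔽) :
    glAct 𝔽 d g (linForm 𝔽 d c) =
      linForm 𝔽 d (Matrix.vecMul c ((g⁻¹ : GL (Fin d) 𝔽) : Matrix (Fin d) (Fin d) 𝔽)) := by
  simp only [glAct, linForm, map_sum, map_mul, aeval_C, aeval_X, algebraMap_eq,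
    Matrix.vecMul, dotProduct, map_sum, C_mul, Finset.mul_sum, Finset.sum_mul]
  rw [Finset.sum_comm]
  simp [mul_assoc]

lemma glAct_dickson (g : GL (Fin d) 𝔽) : glAct 𝔽 d g (dickson 𝔽 d) = dickson 𝔽 d := by
  unfold dickson
  rw [map_prod]
  simp only [glAct_linForm]
  refine Finset.prod_bij'
    (fun c _ => Matrix.vecMul c ((g⁻¹ : GL (Fin d) 𝔽) : Matrix (Fin d) (Fin d) 𝔽))
    (fun c _ => Matrix.vecMul c ((g : GL (Fin d) 𝔽) : Matrix (Fin d) (Fin d) 𝔽))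
    ?_ ?_ ?_ ?_ ?_
  · intro c hc
    simp only [Finset.mem_filter, Finset.mem_univ, true_and] at hc ⊢
    intro h0
    apply hc
    have h2 := congrArg
      (fun v => Matrix.vecMul v ((g : GL (Fin d) 𝔽) : Matrix (Fin d) (Fin d) 𝔽)) h0
    simp only [Matrix.vecMul_vecMul, Matrix.zero_vecMul, ← Units.val_mul, inv_mul_cancel,
      Units.val_one, Matrix.vecMul_one] at h2
    exact h2
  · intro c hc
    simp only [Finset.mem_filter, Finset.mem_univ, true_and] at hc ⊢
    intro h0
    apply hc
    have h2 := congrArg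
      (fun v => Matrix.vecMul v ((g⁻¹ : GL (Fin d) 𝔽) : Matrix (Fin d) (Fin d) 𝔽)) h0
    simp only [Matrix.vecMul_vecMul, Matrix.zero_vecMul, ← Units.val_mul, mul_inv_cancel,
      Units.val_one, Matrix.vecMul_one] at h2
    exact h2
  · intro c hc
    simp only [Matrix.vecMul_vecMul, ← Units.val_mul, inv_mul_cancel, Units.val_one,
      Matrix.vecMul_one]
  · intro c hc
    simp only [Matrix.vecMul_vecMul, ← Units.val_mul, mul_inv_cancel, Units.val_one,
      Matrix.vecMul_one]
  · intro c hc
    rfl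

/-- The top Dickson class as an element of the invariant ring `S = R^G`. -/
def dicksonS : invS 𝔽 d G :=
  ⟨dickson 𝔽 d, (mem_invS 𝔽 d G _).mpr fun g _ => glAct_dickson 𝔽 d g⟩

/-! ### Auxiliary material for the proof -/

local instance fintypeG : Fintype G := Fintype.ofFinite _

lemma glAct_glAct (g h : GL (Fin d) 𝔽) (r : PolyR 𝔽 d) :
    glAct 𝔽 d g (glAct 𝔽 d h r) = glAct 𝔽 d (g * h) r := by
  rw [glAct_mul]; rfl

lemma glAct_inv_cancel (g : GL (Fin d) 𝔽) (r : PolyR 𝔽 d) :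
    glAct 𝔽 d g (glAct 𝔽 d g⁻¹ r) = r := by
  rw [glAct_glAct, mul_inv_cancel, glAct_one]; rfl

/-- The trace (transfer) of `u` with respect to the `G`-action. -/
def traceEl (u : PolyR 𝔽 d) : PolyR 𝔽 d := ∑ x : G, glAct 𝔽 d (↑x) u

lemma traceEl_mem (u : PolyR 𝔽 d) : traceEl 𝔽 d G u ∈ invS 𝔽 d G := by
  rw [mem_invS]
  intro g hg
  rw [traceEl, map_sum]
  exact Fintype.sum_equiv (Equiv.mulLeft (⟨g, hg⟩ : G)) _ _ fun x => by
    rw [glAct_glAct]; rfl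

lemma linForm_injective : Function.Injective (linForm 𝔽 d) := by
  intro c c' h
  funext j
  have h2 := congrArg (MvPolynomial.coeff (Finsupp.single j 1)) h
  simpa [linForm, MvPolynomial.coeff_sum, MvPolynomial.coeff_C_mul, MvPolynomial.coeff_X',
    Finsupp.single_left_inj (one_ne_zero (α := ℕ)), Finset.sum_ite_eq'] using h2

lemma glAct_injective : Function.Injective fun g : GL (Fin d) 𝔽 => ⇑(glAct 𝔽 d g) := by
  intro g h hgh
  have h1 : ∀ i, linForm 𝔽 d (fun j => ((g⁻¹ : GL (Fin d) 𝔽) : Matrix (Fin d) (Fin d) 𝔽) i j) =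
      linForm 𝔽 d (fun j => ((h⁻¹ : GL (Fin d) 𝔽) : Matrix (Fin d) (Fin d) 𝔽) i j) := by
    intro i
    have := congrFun hgh (X i)
    simpa [glAct] using this
  have h2 : (g⁻¹ : GL (Fin d) 𝔽) = (h⁻¹ : GL (Fin d) 𝔽) := by
    apply Units.ext
    ext i j
    exact congrFun (linForm_injective 𝔽 d (h1 i)) j
  exact inv_injective h2

lemma exists_traceEl_ne_zero : ∃ u : PolyR 𝔽 d, traceEl 𝔽 d G u ≠ 0 := by
  by_contra hcon
  push_neg at hcon
  have hinj : Function.Injective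
      (fun x : G => ((glAct 𝔽 d (↑x : GL (Fin d) 𝔽) : PolyR 𝔽 d →ₐ[𝔽] PolyR 𝔽 d) :
        PolyR 𝔽 d →* PolyR 𝔽 d)) := by
    intro x y hxy
    apply Subtype.ext
    apply glAct_injective 𝔽 d
    funext r
    exact DFunLike.congr_fun hxy r
  have li := (linearIndependent_monoidHom (PolyR 𝔽 d) (PolyR 𝔽 d)).comp _ hinj
  have := Fintype.linearIndependent_iff.mp li (fun _ => 1) ?_ ⟨1, one_mem G⟩
  · exact one_ne_zero this
  · funext u
    have : (∑ x : G, glAct 𝔽 d (↑x) u) = 0 := hcon u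
    simpa [Finset.sum_apply] using this

lemma invS_smul_def (s : invS 𝔽 d G) (r : PolyR 𝔽 d) : s • r = (s : PolyR 𝔽 d) * r := rfl

lemma invS_neg_one_pow_smul (m : ℕ) (r : PolyR 𝔽 d) :
    ((-1 : invS 𝔽 d G) ^ m) • r = (-1 : PolyR 𝔽 d) ^ m * r := by
  rw [invS_smul_def]
  congr 1

set_option synthInstance.maxHeartbeats 1000000 in
lemma invS_neg_one_pow_smul' (m : ℕ) (r : CoeSort.coe (Rep.of (invRep 𝔽 d G))) :
    ((-1 : invS 𝔽 d G) ^ m) • r = (-1 : PolyR 𝔽 d) ^ m * (show PolyR 𝔽 d from r) :=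
  invS_neg_one_pow_smul 𝔽 d G m r

lemma contractNth_zero_cons {α : Type*} {n : ℕ} (op : α → α → α) (a : α) (g : Fin (n + 1) → α) :
    Fin.contractNth 0 op (Fin.cons a g) = Fin.cons (op a (g 0)) (fun k => g k.succ) := by
  funext i
  induction i using Fin.cases with
  | zero =>
      rw [Fin.contractNth_apply_of_eq _ _ _ _ rfl]
      simp
  | succ k =>
      rw [Fin.contractNth_apply_of_gt _ _ _ _ (by simp)]
      simp

lemma contractNth_succ_cons {α : Type*} {n : ℕ} (j : Fin (n + 1)) (op : α → α → α) (a : α)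
    (g : Fin (n + 1) → α) :
    Fin.contractNth j.succ op (Fin.cons a g) = Fin.cons a (Fin.contractNth j op g) := by
  funext i
  induction i using Fin.cases with
  | zero =>
      rw [Fin.contractNth_apply_of_lt _ _ _ _ (by simp)]
      simp
  | succ k =>
      rcases lt_trichotomy (k : ℕ) (j : ℕ) with h | h | h
      · rw [Fin.contractNth_apply_of_lt _ _ _ _ (by simpa using h)]
        simp only [Fin.castSucc_fin_succ, Fin.cons_succ]
        rw [Fin.contractNth_apply_of_lt _ _ _ _ h]
      · rw [Fin.contractNth_apply_of_eq _ _ _ _ (by simpa using h)]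
        simp only [Fin.castSucc_fin_succ, Fin.cons_succ]
        rw [Fin.contractNth_apply_of_eq _ _ _ _ h]
      · rw [Fin.contractNth_apply_of_gt _ _ _ _ (by simpa using h)]
        simp only [Fin.castSucc_fin_succ, Fin.cons_succ]
        rw [Fin.contractNth_apply_of_gt _ _ _ _ h]

/-- The contracting-homotopy map on inhomogeneous cochains. -/
def sfun (u : PolyR 𝔽 d) (n : ℕ) (f : (Fin (n + 1) → G) → PolyR 𝔽 d) :
    (Fin n → G) → PolyR 𝔽 d :=
  fun g => ∑ x : G, glAct 𝔽 d (↑x) (u * f (Fin.cons x⁻¹ g))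

/-- The differential of the inhomogeneous cochain complex, with the source and target
realized as plain function spaces. -/
def dI (n : ℕ) : ((Fin n → G) → PolyR 𝔽 d) →ₗ[invS 𝔽 d G] ((Fin (n + 1) → G) → PolyR 𝔽 d) :=
  (inhomogeneousCochains.d (Rep.of (invRep 𝔽 d G)) n).hom

lemma rho_apply (y : G) (r : PolyR 𝔽 d) :
    (Rep.of (invRep 𝔽 d G)).ρ y r = glAct 𝔽 d (↑y) r := rfl

lemma key_identity (u : PolyR 𝔽 d) (n : ℕ) (f : (Fin (n + 1) → G) → PolyR 𝔽 d)
    (g : Fin (n + 1) → G) :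
    traceEl 𝔽 d G u * f g =
      (∑ x : G, glAct 𝔽 d (↑x) (u * dI 𝔽 d G (n + 1) f (Fin.cons x⁻¹ g)))
      + dI 𝔽 d G n (sfun 𝔽 d G u n f) g := by
  have hp : ∀ m : ℕ, (-1 : PolyR 𝔽 d) ^ (m + 1 + 1) = (-1 : PolyR 𝔽 d) ^ m := fun m => by ring
  have hdx : ∀ x : G, dI 𝔽 d G (n + 1) f (Fin.cons x⁻¹ g) =
      glAct 𝔽 d (↑x)⁻¹ (f g)
      + (-1 : PolyR 𝔽 d) * f (Fin.cons (x⁻¹ * g 0) (fun i => g i.succ))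
      + ∑ k : Fin (n + 1), (-1 : PolyR 𝔽 d) ^ (k : ℕ) *
          f (Fin.cons x⁻¹ (Fin.contractNth k (· * ·) g)) := by
    intro x
    rw [show dI 𝔽 d G (n + 1) f
        = (inhomogeneousCochains.d (Rep.of (invRep 𝔽 d G)) (n + 1)).hom f from rfl]
    rw [inhomogeneousCochains.d_hom_apply, Fin.sum_univ_succ]
    rw [contractNth_zero_cons]
    simp only [contractNth_succ_cons]
    simp only [invS_neg_one_pow_smul', invS_neg_one_pow_smul]
    simp only [Fin.cons_zero, Fin.cons_succ, Fin.val_zero, Fin.val_succ, pow_one, zero_add, hp]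
    rw [rho_apply]
    simp only [InvMemClass.coe_inv]
    ring
  have hd2 : dI 𝔽 d G n (sfun 𝔽 d G u n f) g =
      glAct 𝔽 d (↑(g 0)) (sfun 𝔽 d G u n f (fun i => g i.succ))
      + ∑ k : Fin (n + 1), (-1 : PolyR 𝔽 d) ^ ((k : ℕ) + 1) *
          sfun 𝔽 d G u n f (Fin.contractNth k (· * ·) g) := by
    rw [show dI 𝔽 d G n (sfun 𝔽 d G u n f)
        = (inhomogeneousCochains.d (Rep.of (invRep 𝔽 d G)) n).hom (sfun 𝔽 d G u n f) from rfl]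
    rw [inhomogeneousCochains.d_hom_apply]
    simp only [invS_neg_one_pow_smul', invS_neg_one_pow_smul]
    rw [rho_apply]
  have hS1 : (∑ x : G, glAct 𝔽 d (↑x) (u * glAct 𝔽 d (↑x)⁻¹ (f g)))
      = traceEl 𝔽 d G u * f g := by
    rw [traceEl, Finset.sum_mul]
    refine Finset.sum_congr rfl fun x _ => ?_
    rw [map_mul, glAct_inv_cancel]
  have hP : glAct 𝔽 d (↑(g 0)) (sfun 𝔽 d G u n f (fun i => g i.succ))
      = ∑ x : G, glAct 𝔽 d (↑x) (u * f (Fin.cons (x⁻¹ * g 0) (fun i => g i.succ))) := by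
    rw [sfun, map_sum]
    refine Fintype.sum_equiv (Equiv.mulLeft (g 0)) _ _ fun x => ?_
    rw [glAct_glAct, ← MulMemClass.coe_mul]
    simp [mul_inv_rev, inv_mul_cancel_right]
  have hS2P : (∑ x : G, glAct 𝔽 d (↑x)
        (u * ((-1 : PolyR 𝔽 d) * f (Fin.cons (x⁻¹ * g 0) (fun i => g i.succ)))))
      + glAct 𝔽 d (↑(g 0)) (sfun 𝔽 d G u n f (fun i => g i.succ)) = 0 := by
    rw [hP]
    simp only [neg_one_mul, mul_neg, map_neg, Finset.sum_neg_distrib]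
    exact neg_add_cancel _
  have h1 : ∀ x : G, glAct 𝔽 d (↑x) (u * ∑ k : Fin (n + 1),
        (-1 : PolyR 𝔽 d) ^ (k : ℕ) * f (Fin.cons x⁻¹ (Fin.contractNth k (· * ·) g)))
      = ∑ k : Fin (n + 1), (-1 : PolyR 𝔽 d) ^ (k : ℕ) *
          glAct 𝔽 d (↑x) (u * f (Fin.cons x⁻¹ (Fin.contractNth k (· * ·) g))) := by
    intro x
    rw [Finset.mul_sum, map_sum]
    refine Finset.sum_congr rfl fun k _ => ?_
    rw [mul_left_comm, map_mul, map_pow, map_neg, map_one]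
  have hS3Q : (∑ x : G, glAct 𝔽 d (↑x) (u * ∑ k : Fin (n + 1),
        (-1 : PolyR 𝔽 d) ^ (k : ℕ) * f (Fin.cons x⁻¹ (Fin.contractNth k (· * ·) g))))
      + (∑ k : Fin (n + 1), (-1 : PolyR 𝔽 d) ^ ((k : ℕ) + 1) *
          sfun 𝔽 d G u n f (Fin.contractNth k (· * ·) g)) = 0 := by
    simp only [h1]
    rw [Finset.sum_comm, ← Finset.sum_add_distrib]
    refine Finset.sum_eq_zero fun k _ => ?_
    rw [← Finset.mul_sum]
    simp only [sfun]
    ring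
  have hsum : (∑ x : G, glAct 𝔽 d (↑x) (u * dI 𝔽 d G (n + 1) f (Fin.cons x⁻¹ g)))
      = (∑ x : G, glAct 𝔽 d (↑x) (u * glAct 𝔽 d (↑x)⁻¹ (f g)))
        + ((∑ x : G, glAct 𝔽 d (↑x)
            (u * ((-1 : PolyR 𝔽 d) * f (Fin.cons (x⁻¹ * g 0) (fun i => g i.succ)))))
          + ∑ x : G, glAct 𝔽 d (↑x) (u * ∑ k : Fin (n + 1),
              (-1 : PolyR 𝔽 d) ^ (k : ℕ) *
                f (Fin.cons x⁻¹ (Fin.contractNth k (· * ·) g)))) := by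
    rw [← Finset.sum_add_distrib, ← Finset.sum_add_distrib]
    refine Finset.sum_congr rfl fun x _ => ?_
    rw [hdx x, mul_add, mul_add, map_add, map_add, add_assoc]
  rw [hsum, hS1, hd2]
  linear_combination -hS2P - hS3Q

lemma key_cocycle (u : PolyR 𝔽 d) (n : ℕ) (f : (Fin (n + 1) → G) → PolyR 𝔽 d)
    (hf : dI 𝔽 d G (n + 1) f = 0) :
    (⟨traceEl 𝔽 d G u, traceEl_mem 𝔽 d G u⟩ : invS 𝔽 d G) • f =
      dI 𝔽 d G n (sfun 𝔽 d G u n f) := by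
  funext g
  have h := key_identity 𝔽 d G u n f g
  rw [hf] at h
  simp only [Pi.zero_apply, mul_zero, map_zero, Finset.sum_const_zero, zero_add] at h
  rw [Pi.smul_apply, invS_smul_def]
  exact h

/-- **Proposition.** For every `i ≥ 1`, the annihilator `J_i = ann_S H^i(G, R)` is a
nonzero ideal of `S`. -/
theorem annJ_ne_bot (i : ℕ) (hi : 1 ≤ i) : annJ 𝔽 d G i ≠ ⊥ := by
  obtain ⟨u, hu⟩ := exists_traceEl_ne_zero 𝔽 d G
  have hc : (⟨traceEl 𝔽 d G u, traceEl_mem 𝔽 d G u⟩ : invS 𝔽 d G) ≠ 0 :=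
    fun h => hu (congrArg Subtype.val h)
  have hmem : (⟨traceEl 𝔽 d G u, traceEl_mem 𝔽 d G u⟩ : invS 𝔽 d G) ∈ annJ 𝔽 d G i := by
    obtain ⟨n, rfl⟩ : ∃ n, i = n + 1 := ⟨i - 1, (Nat.succ_pred_eq_of_pos hi).symm⟩
    rw [annJ, Module.mem_annihilator]
    have main : ∀ m : ((groupCohomology.inhomogeneousCochains (Rep.of (invRep 𝔽 d G))).homology
        (n + 1)),
        (⟨traceEl 𝔽 d G u, traceEl_mem 𝔽 d G u⟩ : invS 𝔽 d G) • m = 0 := by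
      intro m
      obtain ⟨y, hy⟩ :=
        (ModuleCat.epi_iff_surjective
          ((groupCohomology.inhomogeneousCochains (Rep.of (invRep 𝔽 d G))).homologyπ
            (n + 1))).mp inferInstance m
      rw [← hy, ← map_smul]
      have hf : dI 𝔽 d G (n + 1)
          ((groupCohomology.inhomogeneousCochains (Rep.of (invRep 𝔽 d G))).iCycles (n + 1) y)
            = 0 := by
        have h0 := LinearMap.congr_fun (ModuleCat.hom_ext_iff.mp
          ((groupCohomology.inhomogeneousCochains
            (Rep.of (invRep 𝔽 d G))).iCycles_d (n + 1) (n + 2))) y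
        rw [groupCohomology.inhomogeneousCochains.d_def] at h0
        exact h0
      have hy2 : (⟨traceEl 𝔽 d G u, traceEl_mem 𝔽 d G u⟩ : invS 𝔽 d G) • y =
          (groupCohomology.inhomogeneousCochains (Rep.of (invRep 𝔽 d G))).toCycles n (n + 1)
            (sfun 𝔽 d G u n
              ((groupCohomology.inhomogeneousCochains
                (Rep.of (invRep 𝔽 d G))).iCycles (n + 1) y)) := by
        apply (ModuleCat.mono_iff_injective
          ((groupCohomology.inhomogeneousCochains
            (Rep.of (invRep 𝔽 d G))).iCycles (n + 1))).mp inferInstance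
        rw [map_smul]
        have h3 : (⟨traceEl 𝔽 d G u, traceEl_mem 𝔽 d G u⟩ : invS 𝔽 d G) •
            ((groupCohomology.inhomogeneousCochains
              (Rep.of (invRep 𝔽 d G))).iCycles (n + 1) y) =
            dI 𝔽 d G n (sfun 𝔽 d G u n
              ((groupCohomology.inhomogeneousCochains
                (Rep.of (invRep 𝔽 d G))).iCycles (n + 1) y)) :=
          key_cocycle 𝔽 d G u n _ hf
        rw [h3]
        have h1 := LinearMap.congr_fun (ModuleCat.hom_ext_iff.mp
          ((groupCohomology.inhomogeneousCochains
            (Rep.of (invRep 𝔽 d G))).toCycles_i n (n + 1)))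
          (sfun 𝔽 d G u n
            ((groupCohomology.inhomogeneousCochains
              (Rep.of (invRep 𝔽 d G))).iCycles (n + 1) y))
        rw [groupCohomology.inhomogeneousCochains.d_def] at h1
        exact h1.symm
      rw [hy2]
      have h2 := LinearMap.congr_fun (ModuleCat.hom_ext_iff.mp
        ((groupCohomology.inhomogeneousCochains
          (Rep.of (invRep 𝔽 d G))).toCycles_comp_homologyπ n (n + 1)))
        (sfun 𝔽 d G u n
          ((groupCohomology.inhomogeneousCochains
            (Rep.of (invRep 𝔽 d G))).iCycles (n + 1) y))
      exact h2
    exact fun m => main m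
  intro hbot
  rw [hbot] at hmem
  exact hc (Ideal.mem_bot.mp hmem)

end
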